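/- Let $A$ be a left-symmetric conformal algebra and $\theta_t$ a formal 1-parameter deformation of $A$. Then $\Theta_t$ defined by $(\Theta_t)_\lambda(a,b) = (\theta_t)_\lambda(a,b) - (\theta_t)_{-\partial-\lambda}(b,a)$ is a formal 1-parameter deformation of the sub-adjacent Lie conformal algebra $g(A)$. -/
import Mathlib


/- Encoding conventions.
A `ℂ[∂]`-module is encoded as a complex vector space `A` together with an
endomorphism `D : Module.End ℂ A` (the action of `∂`).
A polynomial `Σ cₙ λⁿ ∈ A[λ]` is encoded by its coefficient family `ℕ →₀ A`,
and `ev l p` is its evaluation at `λ = l`.  Since `ℂ` is infinite, a polynomial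
identity in the formal variables `λ, μ, …` is equivalent to the corresponding
family of identities for all complex values of the variables, which is how all
axioms are stated below.
A `λ`-product `a ⊗ b ↦ a_λ b ∈ A[λ]` is encoded as `mul : A → A → (ℕ →₀ A)`
(the coefficients of `a_λ b`), its evaluation at `λ = l` being `ev l (mul a b)`.
`substNeg D p` is the result of substituting the variable of `p` by `-∂-λ`:
it is again a polynomial in `λ` with coefficients `ℕ →₀ A`, so that
`b_{-∂-λ} a` is encoded as `substNeg D (mul b a)` (as a polynomial in `λ`). -/

namespace LSCpaper

open Finsupp

variable {A M V : Type*} [AddCommGroup A] [Module ℂ A] [AddCommGroup M] [Module ℂ M]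
  [AddCommGroup V] [Module ℂ V]

/-- Evaluation of a polynomial with coefficients in `V` at a complex number. -/
noncomputable def ev (l : ℂ) (p : ℕ →₀ V) : V := p.sum fun n c => l ^ n • c

/-- Substitution of `-∂ - λ` for the variable of `p`; the result is the
coefficient family (in `λ`) of the resulting polynomial. -/
noncomputable def substNeg (D : Module.End ℂ A) (p : ℕ →₀ A) : ℕ →₀ A :=
  p.sum fun i c => ∑ k ∈ Finset.range (i + 1),
    Finsupp.single k ((((-1 : ℂ) ^ k * (i.choose k : ℂ))) • ((-D) ^ (i - k)) c)

/-- `ℂ`-bilinearity of a `λ`-product. -/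
def Bilin (f : A → M → ℕ →₀ V) : Prop :=
  (∀ a a' b, f (a + a') b = f a b + f a' b) ∧
  (∀ (r : ℂ) (a : A) (b : M), f (r • a) b = r • f a b) ∧
  (∀ a b b', f a (b + b') = f a b + f a b') ∧
  (∀ (r : ℂ) (a : A) (b : M), f a (r • b) = r • f a b)

/-- `A` with `∂`-action `D` and `λ`-product `mul` is a left-symmetric conformal
algebra. -/
structure IsLSC (D : Module.End ℂ A) (mul : A → A → ℕ →₀ A) : Prop where
  bilin : Bilin mul
  sesq1 : ∀ (l : ℂ) (a b : A), ev l (mul (D a) b) = (-l) • ev l (mul a b)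
  sesq2 : ∀ (l : ℂ) (a b : A), ev l (mul a (D b)) = D (ev l (mul a b)) + l • ev l (mul a b)
  lsym : ∀ (l m : ℂ) (a b c : A),
    ev (l + m) (mul (ev l (mul a b)) c) - ev l (mul a (ev m (mul b c))) =
      ev (l + m) (mul (ev m (mul b a)) c) - ev m (mul b (ev l (mul a c)))

/-- `A` with `∂`-action `D` and `λ`-bracket `br` is a Lie conformal algebra. -/
structure IsLieConf (D : Module.End ℂ A) (br : A → A → ℕ →₀ A) : Prop where
  bilin : Bilin br
  sesq1 : ∀ (l : ℂ) (a b : A), ev l (br (D a) b) = (-l) • ev l (br a b)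
  sesq2 : ∀ (l : ℂ) (a b : A), ev l (br a (D b)) = D (ev l (br a b)) + l • ev l (br a b)
  skew : ∀ (l : ℂ) (a b : A), ev l (br a b) = - ev l (substNeg D (br b a))
  jacobi : ∀ (l m : ℂ) (a b c : A),
    ev l (br a (ev m (br b c))) =
      ev (l + m) (br (ev l (br a b)) c) + ev m (br b (ev l (br a c)))

/-- The evaluated bracket `[a_λ b] = a_λ b - b_{-∂-λ} a` of the sub-adjacent
Lie conformal algebra. -/
noncomputable def brEv (D : Module.End ℂ A) (mul : A → A → ℕ →₀ A) (l : ℂ) (a b : A) : A :=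
  ev l (mul a b) - ev l (substNeg D (mul b a))

end LSCpaper

namespace LSCpaper

variable {A : Type*} [AddCommGroup A] [Module ℂ A]

/-- `θ` (with `θ 0` the original product) is a formal `1`-parameter
deformation of the left-symmetric conformal algebra `(A, D, θ 0)`:
each `θ i` is a `2`-cochain and the left-symmetric identity holds in each
degree of `t`. -/
structure IsFormalDef (D : Module.End ℂ A) (θ : ℕ → A → A → ℕ →₀ A) : Prop where
  base : IsLSC D (θ 0)
  bilin : ∀ i, Bilin (θ i)
  sesq1 : ∀ i (l : ℂ) (a b : A), ev l (θ i (D a) b) = (-l) • ev l (θ i a b)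
  sesq2 : ∀ i (l : ℂ) (a b : A),
    ev l (θ i a (D b)) = D (ev l (θ i a b)) + l • ev l (θ i a b)
  deform : ∀ (n : ℕ) (l m : ℂ) (a b c : A),
    (∑ i ∈ Finset.range (n + 1),
        (ev (l + m) (θ i (ev l (θ (n - i) a b)) c)
          - ev l (θ i a (ev m (θ (n - i) b c))))) =
      (∑ i ∈ Finset.range (n + 1),
        (ev (l + m) (θ i (ev m (θ (n - i) b a)) c)
          - ev m (θ i b (ev l (θ (n - i) a c)))))

end LSCpaper

namespace LSCpaper

variable {A : Type*} [AddCommGroup A] [Module ℂ A]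

/-- `Θ` (with `Θ 0` the original bracket) is a formal `1`-parameter
deformation of the Lie conformal algebra `(A, D, Θ 0)`: each `Θ i` is a skew
`2`-cochain and the Jacobi identity holds in each degree of `t`. -/
structure IsLieFormalDef (D : Module.End ℂ A) (Θ : ℕ → A → A → ℕ →₀ A) : Prop where
  base : IsLieConf D (Θ 0)
  bilin : ∀ i, Bilin (Θ i)
  sesq1 : ∀ i (l : ℂ) (a b : A), ev l (Θ i (D a) b) = (-l) • ev l (Θ i a b)
  sesq2 : ∀ i (l : ℂ) (a b : A),
    ev l (Θ i a (D b)) = D (ev l (Θ i a b)) + l • ev l (Θ i a b)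
  skew : ∀ i (l : ℂ) (a b : A), ev l (Θ i a b) = - ev l (substNeg D (Θ i b a))
  deform : ∀ (n : ℕ) (l m : ℂ) (a b c : A),
    (∑ i ∈ Finset.range (n + 1), ev l (Θ i a (ev m (Θ (n - i) b c)))) =
      ∑ i ∈ Finset.range (n + 1),
        (ev (l + m) (Θ i (ev l (Θ (n - i) a b)) c)
          + ev m (Θ i b (ev l (Θ (n - i) a c))))

/-! ### Auxiliary machinery -/

section AuxBasic

variable {A : Type*} [AddCommGroup A] [Module ℂ A]

/-- Evaluation of a polynomial at an endomorphism. -/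
noncomputable def opEv (T : Module.End ℂ A) (p : ℕ →₀ A) : A :=
  p.sum fun n c => (T ^ n) c

/-- `opEv` as a linear map. -/
noncomputable def opEvL (T : Module.End ℂ A) : (ℕ →₀ A) →ₗ[ℂ] A :=
  Finsupp.lsum ℂ fun n => (T ^ n : Module.End ℂ A)

lemma opEv_eq (T : Module.End ℂ A) (p : ℕ →₀ A) : opEv T p = opEvL T p := rfl

@[simp] lemma opEv_single (T : Module.End ℂ A) (n : ℕ) (c : A) :
    opEv T (Finsupp.single n c) = (T ^ n) c :=
  Finsupp.sum_single_index (by simp)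

@[simp] lemma opEv_zero (T : Module.End ℂ A) : opEv T (0 : ℕ →₀ A) = 0 := by
  simp [opEv]

lemma opEv_add (T : Module.End ℂ A) (p q : ℕ →₀ A) :
    opEv T (p + q) = opEv T p + opEv T q := by
  simp only [opEv_eq, map_add]

lemma opEv_sub (T : Module.End ℂ A) (p q : ℕ →₀ A) :
    opEv T (p - q) = opEv T p - opEv T q := by
  simp only [opEv_eq, map_sub]

lemma opEv_neg (T : Module.End ℂ A) (p : ℕ →₀ A) : opEv T (-p) = - opEv T p := by
  simp only [opEv_eq, map_neg]

lemma opEv_smul (T : Module.End ℂ A) (r : ℂ) (p : ℕ →₀ A) :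
    opEv T (r • p) = r • opEv T p := by
  simp only [opEv_eq, map_smul]

lemma opEv_finsuppSum {ι β : Type*} [Zero β] (T : Module.End ℂ A) (q : ι →₀ β)
    (g : ι → β → ℕ →₀ A) : opEv T (q.sum g) = q.sum fun i c => opEv T (g i c) := by
  simp only [opEv_eq]; exact map_finsuppSum (opEvL T) q g

lemma opEv_finsetSum {ι : Type*} (T : Module.End ℂ A) (s : Finset ι) (g : ι → ℕ →₀ A) :
    opEv T (∑ i ∈ s, g i) = ∑ i ∈ s, opEv T (g i) := by
  simp only [opEv_eq]; exact map_sum (opEvL T) g s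

lemma ev_eq_opEv (l : ℂ) (p : ℕ →₀ A) : ev l p = opEv (l • (1 : Module.End ℂ A)) p := by
  unfold ev opEv
  refine Finsupp.sum_congr fun n _ => ?_
  rw [smul_pow, one_pow]
  simp

@[simp] lemma ev_single (l : ℂ) (n : ℕ) (c : A) : ev l (Finsupp.single n c) = l ^ n • c :=
  Finsupp.sum_single_index (by simp)

@[simp] lemma ev_zero (l : ℂ) : ev l (0 : ℕ →₀ A) = 0 := by simp [ev]

lemma ev_add (l : ℂ) (p q : ℕ →₀ A) : ev l (p + q) = ev l p + ev l q := by
  rw [ev_eq_opEv, ev_eq_opEv, ev_eq_opEv, opEv_add]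

lemma ev_sub (l : ℂ) (p q : ℕ →₀ A) : ev l (p - q) = ev l p - ev l q := by
  rw [ev_eq_opEv, ev_eq_opEv, ev_eq_opEv, opEv_sub]

lemma ev_smul (l : ℂ) (r : ℂ) (p : ℕ →₀ A) : ev l (r • p) = r • ev l p := by
  rw [ev_eq_opEv, ev_eq_opEv, opEv_smul]

lemma ev_finsuppSum {ι β : Type*} [Zero β] (l : ℂ) (q : ι →₀ β) (g : ι → β → ℕ →₀ A) :
    ev l (q.sum g) = q.sum fun i c => ev l (g i c) := by
  rw [ev_eq_opEv, opEv_finsuppSum]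
  exact Finsupp.sum_congr fun i _ => (ev_eq_opEv _ _).symm

lemma ev_finsetSum {ι : Type*} (l : ℂ) (s : Finset ι) (g : ι → ℕ →₀ A) :
    ev l (∑ i ∈ s, g i) = ∑ i ∈ s, ev l (g i) := by
  rw [ev_eq_opEv, opEv_finsetSum]
  exact Finset.sum_congr rfl fun i _ => (ev_eq_opEv _ _).symm

/-- Polynomial extraction: a polynomial vanishing at every complex point is zero. -/
lemma eq_zero_of_ev (p : ℕ →₀ A) (h : ∀ l : ℂ, ev l p = 0) : p = 0 := by
  ext n
  rw [Finsupp.coe_zero, Pi.zero_apply, ← Module.forall_dual_apply_eq_zero_iff ℂ]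
  intro φ
  set P : Polynomial ℂ := ∑ k ∈ p.support, Polynomial.C (φ (p k)) * Polynomial.X ^ k with hP
  have hev : ∀ l : ℂ, P.eval l = φ (ev l p) := by
    intro l
    rw [hP, ev, Finsupp.sum, map_sum φ, Polynomial.eval_finset_sum]
    refine Finset.sum_congr rfl fun k _ => ?_
    rw [Polynomial.eval_mul, Polynomial.eval_C, Polynomial.eval_pow, Polynomial.eval_X,
      map_smul, smul_eq_mul, mul_comm]
  have hP0 : P = 0 := Polynomial.funext fun l => by
    rw [hev l, h l, map_zero, Polynomial.eval_zero]
  have hc : P.coeff n = φ (p n) := by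
    rw [hP, Polynomial.finset_sum_coeff]
    have hterm : ∀ k, (Polynomial.C (φ (p k)) * Polynomial.X ^ k).coeff n
        = if k = n then φ (p k) else 0 := by
      intro k
      rw [Polynomial.coeff_C_mul, Polynomial.coeff_X_pow]
      by_cases hk : k = n
      · simp [hk]
      · simp [hk, Ne.symm hk]
    rw [Finset.sum_congr rfl fun k _ => hterm k, Finset.sum_ite_eq' p.support n fun k => φ (p k)]
    by_cases hn : n ∈ p.support
    · simp [hn]
    · rw [if_neg hn, Finsupp.notMem_support_iff.mp hn, map_zero]
  rw [← hc, hP0, Polynomial.coeff_zero]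

lemma ev_ext {p q : ℕ →₀ A} (h : ∀ l : ℂ, ev l p = ev l q) : p = q := by
  have := eq_zero_of_ev (p - q) (fun l => by rw [ev_sub, h l, sub_self])
  exact sub_eq_zero.mp this

end AuxBasic
section AuxSubst

variable {A : Type*} [AddCommGroup A] [Module ℂ A]

lemma substNeg_add (D : Module.End ℂ A) (p q : ℕ →₀ A) :
    substNeg D (p + q) = substNeg D p + substNeg D q := by
  unfold substNeg
  refine Finsupp.sum_add_index' (fun i => by simp) (fun i c c' => ?_)
  simp [map_add, smul_add, Finsupp.single_add, Finset.sum_add_distrib]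

lemma substNeg_smul (D : Module.End ℂ A) (r : ℂ) (p : ℕ →₀ A) :
    substNeg D (r • p) = r • substNeg D p := by
  unfold substNeg
  rw [Finsupp.sum_smul_index' (fun i => by simp), Finsupp.smul_sum]
  refine Finsupp.sum_congr fun i _ => ?_
  rw [Finset.smul_sum]
  refine Finset.sum_congr rfl fun k _ => ?_
  rw [map_smul, Finsupp.smul_single, smul_smul, smul_smul, mul_comm]

lemma substNeg_sub (D : Module.End ℂ A) (p q : ℕ →₀ A) :
    substNeg D (p - q) = substNeg D p - substNeg D q := by
  have h := substNeg_add D (p - q) q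
  rw [sub_add_cancel] at h
  rw [h]; abel

lemma opEv_substNeg (D T : Module.End ℂ A) (hT : Commute D T) (p : ℕ →₀ A) :
    opEv T (substNeg D p) = opEv (-T - D) p := by
  unfold substNeg
  rw [opEv_finsuppSum]
  have hrfl : opEv (-T - D) p = p.sum fun i c => ((-T - D) ^ i) c := rfl
  rw [hrfl]
  refine Finsupp.sum_congr fun i _ => ?_
  rw [opEv_finsetSum]
  have hc : Commute (-T) (-D) := (hT.symm.neg_left).neg_right
  have hpow : (-T - D) ^ i
      = ∑ k ∈ Finset.range (i + 1), (-T) ^ k * (-D) ^ (i - k) * (i.choose k : Module.End ℂ A) := by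
    rw [sub_eq_add_neg, hc.add_pow]
  rw [hpow, LinearMap.sum_apply]
  refine Finset.sum_congr rfl fun k _ => ?_
  rw [opEv_single]
  have h1 : (-T) ^ k = ((-1 : ℂ) ^ k) • T ^ k := by
    rw [← smul_pow]
    norm_num
  simp only [Module.End.mul_apply, Module.End.natCast_apply, h1, LinearMap.smul_apply,
    map_smul, map_nsmul, ← Nat.cast_smul_eq_nsmul ℂ, smul_smul]
  module

lemma ev_substNeg (D : Module.End ℂ A) (l : ℂ) (p : ℕ →₀ A) :
    ev l (substNeg D p) = opEv (-(l • (1 : Module.End ℂ A)) - D) p := by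
  rw [ev_eq_opEv, opEv_substNeg]
  exact ((Commute.one_right D).smul_right l)

lemma opEv_substNeg_substNeg (D : Module.End ℂ A) (l : ℂ) (p : ℕ →₀ A) :
    ev l (substNeg D (substNeg D p)) = ev l p := by
  rw [ev_substNeg, opEv_substNeg, ev_eq_opEv]
  · congr 1
    abel
  · exact (((Commute.one_right D).smul_right l).neg_right).sub_right (Commute.refl D)

/-- Taylor shift: represents `p(x + λ)` as a polynomial in `λ`. -/
noncomputable def shiftPoly (x : ℂ) (p : ℕ →₀ A) : ℕ →₀ A :=
  p.sum fun s c => ∑ k ∈ Finset.range (s + 1),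
    Finsupp.single k ((x ^ (s - k) * (s.choose k : ℂ)) • c)

lemma opEv_shiftPoly (T : Module.End ℂ A) (x : ℂ) (p : ℕ →₀ A) :
    opEv T (shiftPoly x p) = opEv (x • (1 : Module.End ℂ A) + T) p := by
  unfold shiftPoly
  rw [opEv_finsuppSum]
  have hrfl : opEv (x • (1 : Module.End ℂ A) + T) p
      = p.sum fun s c => ((x • (1 : Module.End ℂ A) + T) ^ s) c := rfl
  rw [hrfl]
  refine Finsupp.sum_congr fun s _ => ?_
  rw [opEv_finsetSum]
  have hc : Commute T (x • (1 : Module.End ℂ A)) := (Commute.one_right T).smul_right x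
  have hpow : (x • (1 : Module.End ℂ A) + T) ^ s
      = ∑ k ∈ Finset.range (s + 1),
          T ^ k * (x • (1 : Module.End ℂ A)) ^ (s - k) * (s.choose k : Module.End ℂ A) := by
    rw [add_comm, hc.add_pow]
  rw [hpow, LinearMap.sum_apply]
  refine Finset.sum_congr rfl fun k _ => ?_
  rw [opEv_single]
  simp only [Module.End.mul_apply, Module.End.natCast_apply, smul_pow, one_pow,
    LinearMap.smul_apply, Module.End.one_apply, map_smul, map_nsmul,
    ← Nat.cast_smul_eq_nsmul ℂ, smul_smul]
  module

/-- Degree shift: multiplication by `λ ^ r`. -/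
noncomputable def shiftUp (r : ℕ) (p : ℕ →₀ A) : ℕ →₀ A :=
  p.sum fun s c => Finsupp.single (s + r) c

lemma opEv_shiftUp (T : Module.End ℂ A) (r : ℕ) (p : ℕ →₀ A) :
    opEv T (shiftUp r p) = (T ^ r) (opEv T p) := by
  unfold shiftUp
  rw [opEv_finsuppSum]
  have hrfl : opEv T p = p.sum fun s c => (T ^ s) c := rfl
  rw [hrfl, map_finsuppSum (T ^ r)]
  refine Finsupp.sum_congr fun s _ => ?_
  rw [opEv_single, add_comm s r, pow_add, Module.End.mul_apply]

end AuxSubst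
section AuxBilin

variable {A : Type*} [AddCommGroup A] [Module ℂ A]
variable {f g : A → A → ℕ →₀ A} {D : Module.End ℂ A}

/-- The left slot of a bilinear product, as a linear map. -/
noncomputable def Bilin.leftLM (hb : Bilin f) (c : A) : A →ₗ[ℂ] (ℕ →₀ A) where
  toFun a := f a c
  map_add' x y := hb.1 x y c
  map_smul' r x := hb.2.1 r x c

/-- The right slot of a bilinear product, as a linear map. -/
noncomputable def Bilin.rightLM (hb : Bilin f) (a : A) : A →ₗ[ℂ] (ℕ →₀ A) where
  toFun b := f a b
  map_add' x y := hb.2.2.1 a x y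
  map_smul' r x := hb.2.2.2 r a x

lemma Bilin.sub_left (hb : Bilin f) (x y c : A) : f (x - y) c = f x c - f y c :=
  map_sub (hb.leftLM c) x y

lemma Bilin.sub_right (hb : Bilin f) (a x y : A) : f a (x - y) = f a x - f a y :=
  map_sub (hb.rightLM a) x y

lemma opEv_bilin_left (hb : Bilin f) (U V : Module.End ℂ A) (p : ℕ →₀ A) (c : A) :
    opEv U (f (opEv V p) c) = p.sum fun r cr => opEv U (f ((V ^ r) cr) c) := by
  calc opEv U (f (opEv V p) c)
      = ((opEvL U).comp (hb.leftLM c)) (p.sum fun r cr => (V ^ r) cr) := rfl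
    _ = p.sum fun r cr => ((opEvL U).comp (hb.leftLM c)) ((V ^ r) cr) :=
        map_finsuppSum _ p _
    _ = p.sum fun r cr => opEv U (f ((V ^ r) cr) c) := rfl

lemma opEv_bilin_right (hb : Bilin f) (U V : Module.End ℂ A) (a : A) (p : ℕ →₀ A) :
    opEv U (f a (opEv V p)) = p.sum fun r cr => opEv U (f a ((V ^ r) cr)) := by
  calc opEv U (f a (opEv V p))
      = ((opEvL U).comp (hb.rightLM a)) (p.sum fun r cr => (V ^ r) cr) := rfl
    _ = p.sum fun r cr => ((opEvL U).comp (hb.rightLM a)) ((V ^ r) cr) :=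
        map_finsuppSum _ p _
    _ = p.sum fun r cr => opEv U (f a ((V ^ r) cr)) := rfl

/-- Operator-level version of the first sesquilinearity axiom. -/
lemma opEv_D_left
    (h1 : ∀ (l : ℂ) (a b : A), ev l (f (D a) b) = (-l) • ev l (f a b))
    (T : Module.End ℂ A) (a b : A) :
    opEv T (f (D a) b) = -(T (opEv T (f a b))) := by
  have key : f (D a) b = (f a b).sum fun k c => Finsupp.single (k + 1) (-c) := by
    apply ev_ext; intro l
    rw [h1, ev_finsuppSum]
    rw [show ev l (f a b) = (f a b).sum fun k c => l ^ k • c from rfl, Finsupp.smul_sum]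
    refine Finsupp.sum_congr fun k _ => ?_
    rw [ev_single]
    match_scalars
    ring
  rw [key, opEv_finsuppSum]
  have hrfl : opEv T (f a b) = (f a b).sum fun k c => (T ^ k) c := rfl
  rw [hrfl, map_finsuppSum T]
  rw [show ((f a b).sum fun k c => opEv T (Finsupp.single (k + 1) (-c)))
      = (f a b).sum fun k c => -(T ((T ^ k) c)) from Finsupp.sum_congr fun k _ => by
    rw [opEv_single, map_neg, pow_succ', Module.End.mul_apply]]
  rw [Finsupp.sum, Finsupp.sum, ← Finset.sum_neg_distrib]

/-- Operator-level version of the second sesquilinearity axiom. -/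
lemma opEv_D_right
    (h2 : ∀ (l : ℂ) (a b : A), ev l (f a (D b)) = D (ev l (f a b)) + l • ev l (f a b))
    {T : Module.End ℂ A} (hT : Commute D T) (a b : A) :
    opEv T (f a (D b)) = D (opEv T (f a b)) + T (opEv T (f a b)) := by
  have key : f a (D b) = (f a b).sum fun k c =>
      (Finsupp.single k (D c) + Finsupp.single (k + 1) c) := by
    apply ev_ext; intro l
    rw [h2, ev_finsuppSum]
    have hD : D (ev l (f a b)) = (f a b).sum fun k c => l ^ k • D c := by
      rw [show ev l (f a b) = (f a b).sum fun k c => l ^ k • c from rfl, map_finsuppSum D]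
      exact Finsupp.sum_congr fun k _ => map_smul D _ _
    have hl : l • ev l (f a b) = (f a b).sum fun k c => l ^ (k + 1) • c := by
      rw [show ev l (f a b) = (f a b).sum fun k c => l ^ k • c from rfl, Finsupp.smul_sum]
      refine Finsupp.sum_congr fun k _ => ?_
      match_scalars; ring
    rw [hD, hl, ← Finsupp.sum_add]
    refine (Finsupp.sum_congr fun k _ => ?_).symm
    rw [ev_add, ev_single, ev_single]
  rw [key, opEv_finsuppSum]
  have hrfl : opEv T (f a b) = (f a b).sum fun k c => (T ^ k) c := rfl
  rw [hrfl, map_finsuppSum D, map_finsuppSum T, ← Finsupp.sum_add]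
  refine Finsupp.sum_congr fun k _ => ?_
  rw [opEv_add, opEv_single, opEv_single, pow_succ', Module.End.mul_apply]
  congr 1
  rw [← Module.End.mul_apply, ← (hT.pow_right k).eq, Module.End.mul_apply]

/-- Iterated left sesquilinearity for powers of `-(z•1) - D`. -/
lemma opEv_pow_left (hb : Bilin f)
    (h1 : ∀ (l : ℂ) (a b : A), ev l (f (D a) b) = (-l) • ev l (f a b))
    (T : Module.End ℂ A) (z : ℂ) (r : ℕ) (q b : A) :
    opEv T (f (((-(z • (1 : Module.End ℂ A)) - D) ^ r) q) b)
      = ((T - z • (1 : Module.End ℂ A)) ^ r) (opEv T (f q b)) := by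
  induction r with
  | zero => simp
  | succ r ih =>
    have hL : ((-(z • (1 : Module.End ℂ A)) - D) ^ (r + 1)) q
        = (-(z • (1 : Module.End ℂ A)) - D) (((-(z • (1 : Module.End ℂ A)) - D) ^ r) q) := by
      rw [pow_succ', Module.End.mul_apply]
    have hR : ((T - z • (1 : Module.End ℂ A)) ^ (r + 1)) (opEv T (f q b))
        = (T - z • (1 : Module.End ℂ A)) (((T - z • (1 : Module.End ℂ A)) ^ r) (opEv T (f q b))) := by
      rw [pow_succ', Module.End.mul_apply]
    rw [hL, hR]
    set u := ((-(z • (1 : Module.End ℂ A)) - D) ^ r) q with hu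
    have hexp : ((-(z • (1 : Module.End ℂ A)) - D)) u = (-z) • u - D u := by
      simp [sub_smul, neg_smul]
    rw [hexp, hb.sub_left, hb.2.1, opEv_sub, opEv_smul, opEv_D_left h1, ih]
    set v := ((T - z • (1 : Module.End ℂ A)) ^ r) (opEv T (f q b)) with hv
    simp only [LinearMap.sub_apply, LinearMap.neg_apply, LinearMap.smul_apply, Module.End.one_apply, map_smul, map_sub, map_neg]
    module

/-- Iterated right sesquilinearity for powers of `-(z•1) - D`. -/
lemma opEv_pow_right (hb : Bilin f)
    (h2 : ∀ (l : ℂ) (a b : A), ev l (f a (D b)) = D (ev l (f a b)) + l • ev l (f a b))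
    {T : Module.End ℂ A} (hT : Commute D T) (z : ℂ) (r : ℕ) (a q : A) :
    opEv T (f a (((-(z • (1 : Module.End ℂ A)) - D) ^ r) q))
      = ((-(z • (1 : Module.End ℂ A)) - D - T) ^ r) (opEv T (f a q)) := by
  induction r with
  | zero => simp
  | succ r ih =>
    have hL : ((-(z • (1 : Module.End ℂ A)) - D) ^ (r + 1)) q
        = (-(z • (1 : Module.End ℂ A)) - D) (((-(z • (1 : Module.End ℂ A)) - D) ^ r) q) := by
      rw [pow_succ', Module.End.mul_apply]
    have hR : ((-(z • (1 : Module.End ℂ A)) - D - T) ^ (r + 1)) (opEv T (f a q))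
        = (-(z • (1 : Module.End ℂ A)) - D - T)
            (((-(z • (1 : Module.End ℂ A)) - D - T) ^ r) (opEv T (f a q))) := by
      rw [pow_succ', Module.End.mul_apply]
    rw [hL, hR]
    set u := ((-(z • (1 : Module.End ℂ A)) - D) ^ r) q with hu
    have hexp : ((-(z • (1 : Module.End ℂ A)) - D)) u = (-z) • u - D u := by
      simp [sub_smul, neg_smul]
    rw [hexp, hb.sub_right, hb.2.2.2, opEv_sub, opEv_smul, opEv_D_right h2 hT, ih]
    set v := ((-(z • (1 : Module.End ℂ A)) - D - T) ^ r) (opEv T (f a q)) with hv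
    simp only [LinearMap.sub_apply, LinearMap.neg_apply, LinearMap.smul_apply, Module.End.one_apply, map_smul, map_sub, map_neg]
    module

end AuxBilin
section AuxCLCR

variable {A : Type*} [AddCommGroup A] [Module ℂ A]
variable {f g : A → A → ℕ →₀ A} {D : Module.End ℂ A}

/-- Normal form: inner product in the left slot, inner evaluation operator
moved outside. -/
noncomputable def CL (f g : A → A → ℕ →₀ A) (V U : Module.End ℂ A) (x y w : A) : A :=
  (g x y).sum fun r cr => (V ^ r) (opEv U (f cr w))

/-- Normal form: inner product in the right slot, inner evaluation operator
moved outside. -/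
noncomputable def CR (f g : A → A → ℕ →₀ A) (V U : Module.End ℂ A) (x y w : A) : A :=
  (g y w).sum fun r cr => (V ^ r) (opEv U (f x cr))

lemma CL_scalar (hb : Bilin f) (U : Module.End ℂ A) (z : ℂ) (x y w : A) :
    opEv U (f (opEv (z • (1 : Module.End ℂ A)) (g x y)) w)
      = CL f g (z • (1 : Module.End ℂ A)) U x y w := by
  rw [opEv_bilin_left hb]
  refine Finsupp.sum_congr fun r _ => ?_
  have hzp : (z • (1 : Module.End ℂ A)) ^ r = z ^ r • (1 : Module.End ℂ A) := by
    rw [smul_pow, one_pow]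
  rw [hzp, LinearMap.smul_apply, LinearMap.smul_apply, Module.End.one_apply,
    Module.End.one_apply, hb.2.1, opEv_smul]

lemma CR_scalar (hb : Bilin f) (U : Module.End ℂ A) (z : ℂ) (x y w : A) :
    opEv U (f x (opEv (z • (1 : Module.End ℂ A)) (g y w)))
      = CR f g (z • (1 : Module.End ℂ A)) U x y w := by
  rw [opEv_bilin_right hb]
  refine Finsupp.sum_congr fun r _ => ?_
  have hzp : (z • (1 : Module.End ℂ A)) ^ r = z ^ r • (1 : Module.End ℂ A) := by
    rw [smul_pow, one_pow]
  rw [hzp, LinearMap.smul_apply, LinearMap.smul_apply, Module.End.one_apply,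
    Module.End.one_apply, hb.2.2.2, opEv_smul]

lemma CL_E (hb : Bilin f)
    (h1 : ∀ (l : ℂ) (a b : A), ev l (f (D a) b) = (-l) • ev l (f a b))
    (U : Module.End ℂ A) (z : ℂ) (x y w : A) :
    opEv U (f (opEv (-(z • (1 : Module.End ℂ A)) - D) (g x y)) w)
      = CL f g (U - z • (1 : Module.End ℂ A)) U x y w := by
  rw [opEv_bilin_left hb]
  exact Finsupp.sum_congr fun r _ => opEv_pow_left hb h1 U z r _ w

lemma CR_E (hb : Bilin f)
    (h2 : ∀ (l : ℂ) (a b : A), ev l (f a (D b)) = D (ev l (f a b)) + l • ev l (f a b))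
    {U : Module.End ℂ A} (hT : Commute D U) (z : ℂ) (x y w : A) :
    opEv U (f x (opEv (-(z • (1 : Module.End ℂ A)) - D) (g y w)))
      = CR f g (-(z • (1 : Module.End ℂ A)) - D - U) U x y w := by
  rw [opEv_bilin_right hb]
  exact Finsupp.sum_congr fun r _ => opEv_pow_right hb h2 hT z r x _

end AuxCLCR
section AuxMaster

variable {A : Type*} [AddCommGroup A] [Module ℂ A]
variable {D : Module.End ℂ A} {θ : ℕ → A → A → ℕ →₀ A}

/-- The deformation identity, with the second variable replaced by an
arbitrary endomorphism. -/
lemma master (hθ : IsFormalDef D θ) (n : ℕ) (x : ℂ) (W : Module.End ℂ A) (a b c : A) :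
    ∑ i ∈ Finset.range (n + 1),
        (CL (θ i) (θ (n - i)) (x • (1 : Module.End ℂ A))
            (x • (1 : Module.End ℂ A) + W) a b c
          - CR (θ i) (θ (n - i)) W (x • (1 : Module.End ℂ A)) a b c)
      = ∑ i ∈ Finset.range (n + 1),
        (CL (θ i) (θ (n - i)) W (x • (1 : Module.End ℂ A) + W) b a c
          - CR (θ i) (θ (n - i)) (x • (1 : Module.End ℂ A)) W b a c) := by
  classical
  set q1 : ℕ → ℕ →₀ A := fun i =>
    shiftPoly x ((θ (n - i) a b).sum fun r cr => x ^ r • θ i cr c) with hq1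
  set q2 : ℕ → ℕ →₀ A := fun i =>
    (θ (n - i) b c).sum fun r cr => Finsupp.single r (ev x (θ i a cr)) with hq2
  set q3 : ℕ → ℕ →₀ A := fun i =>
    (θ (n - i) b a).sum fun r cr => shiftUp r (shiftPoly x (θ i cr c)) with hq3
  set q4 : ℕ → ℕ →₀ A := fun i =>
    (θ (n - i) a c).sum fun r cr => x ^ r • θ i b cr with hq4
  have hA : ∀ (i : ℕ) (W : Module.End ℂ A), opEv W (q1 i)
      = CL (θ i) (θ (n - i)) (x • (1 : Module.End ℂ A))
          (x • (1 : Module.End ℂ A) + W) a b c := by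
    intro i W
    rw [hq1]
    rw [opEv_shiftPoly, opEv_finsuppSum]
    refine Finsupp.sum_congr fun r _ => ?_
    rw [opEv_smul]
    have hzp : (x • (1 : Module.End ℂ A)) ^ r = x ^ r • (1 : Module.End ℂ A) := by
      rw [smul_pow, one_pow]
    rw [hzp, LinearMap.smul_apply, Module.End.one_apply]
  have hB : ∀ (i : ℕ) (W : Module.End ℂ A), opEv W (q2 i)
      = CR (θ i) (θ (n - i)) W (x • (1 : Module.End ℂ A)) a b c := by
    intro i W
    rw [hq2, opEv_finsuppSum]
    refine Finsupp.sum_congr fun r _ => ?_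
    rw [opEv_single, ev_eq_opEv]
  have hC : ∀ (i : ℕ) (W : Module.End ℂ A), opEv W (q3 i)
      = CL (θ i) (θ (n - i)) W (x • (1 : Module.End ℂ A) + W) b a c := by
    intro i W
    rw [hq3, opEv_finsuppSum]
    refine Finsupp.sum_congr fun r _ => ?_
    rw [opEv_shiftUp, opEv_shiftPoly]
  have hD : ∀ (i : ℕ) (W : Module.End ℂ A), opEv W (q4 i)
      = CR (θ i) (θ (n - i)) (x • (1 : Module.End ℂ A)) W b a c := by
    intro i W
    rw [hq4, opEv_finsuppSum]
    refine Finsupp.sum_congr fun r _ => ?_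
    rw [opEv_smul]
    have hzp : (x • (1 : Module.End ℂ A)) ^ r = x ^ r • (1 : Module.End ℂ A) := by
      rw [smul_pow, one_pow]
    rw [hzp, LinearMap.smul_apply, Module.End.one_apply]
  have hsmul : ∀ y : ℂ, (x + y) • (1 : Module.End ℂ A)
      = x • (1 : Module.End ℂ A) + y • (1 : Module.End ℂ A) := fun y => add_smul x y 1
  have he1 : ∀ (i : ℕ) (y : ℂ), ev y (q1 i)
      = ev (x + y) (θ i (ev x (θ (n - i) a b)) c) := by
    intro i y
    rw [ev_eq_opEv, hA i, ev_eq_opEv (x + y), ev_eq_opEv x,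
      CL_scalar (hθ.bilin i), hsmul]
  have he2 : ∀ (i : ℕ) (y : ℂ), ev y (q2 i)
      = ev x (θ i a (ev y (θ (n - i) b c))) := by
    intro i y
    rw [ev_eq_opEv, hB i, ev_eq_opEv x, ev_eq_opEv y, CR_scalar (hθ.bilin i)]
  have he3 : ∀ (i : ℕ) (y : ℂ), ev y (q3 i)
      = ev (x + y) (θ i (ev y (θ (n - i) b a)) c) := by
    intro i y
    rw [ev_eq_opEv, hC i, ev_eq_opEv (x + y), ev_eq_opEv y,
      CL_scalar (hθ.bilin i), hsmul]
  have he4 : ∀ (i : ℕ) (y : ℂ), ev y (q4 i)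
      = ev y (θ i b (ev x (θ (n - i) a c))) := by
    intro i y
    rw [ev_eq_opEv, hD i, ev_eq_opEv x, ev_eq_opEv y, CR_scalar (hθ.bilin i)]
  set total : ℕ →₀ A := ∑ i ∈ Finset.range (n + 1), (q1 i - q2 i - q3 i + q4 i) with htotal
  have hzero : total = 0 := by
    apply eq_zero_of_ev
    intro y
    rw [htotal, ev_finsetSum]
    have hterm : ∀ i ∈ Finset.range (n + 1), ev y (q1 i - q2 i - q3 i + q4 i)
        = (ev (x + y) (θ i (ev x (θ (n - i) a b)) c)
            - ev x (θ i a (ev y (θ (n - i) b c))))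
          - (ev (x + y) (θ i (ev y (θ (n - i) b a)) c)
            - ev y (θ i b (ev x (θ (n - i) a c)))) := by
      intro i _
      rw [ev_add, ev_sub, ev_sub, he1 i y, he2 i y, he3 i y, he4 i y]
      abel
    rw [Finset.sum_congr rfl hterm, Finset.sum_sub_distrib, hθ.deform n x y a b c, sub_self]
  have hop := congrArg (opEv W) hzero
  rw [htotal, opEv_finsetSum, opEv_zero] at hop
  have hterm2 : ∀ i ∈ Finset.range (n + 1), opEv W (q1 i - q2 i - q3 i + q4 i)
      = (CL (θ i) (θ (n - i)) (x • (1 : Module.End ℂ A))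
            (x • (1 : Module.End ℂ A) + W) a b c
          - CR (θ i) (θ (n - i)) W (x • (1 : Module.End ℂ A)) a b c)
        - (CL (θ i) (θ (n - i)) W (x • (1 : Module.End ℂ A) + W) b a c
          - CR (θ i) (θ (n - i)) (x • (1 : Module.End ℂ A)) W b a c) := by
    intro i _
    rw [opEv_add, opEv_sub, opEv_sub, hA i W, hB i W, hC i W, hD i W]
    abel
  rw [Finset.sum_congr rfl hterm2, Finset.sum_sub_distrib] at hop
  exact sub_eq_zero.mp hop

end AuxMaster
section AuxTheta

variable {A : Type*} [AddCommGroup A] [Module ℂ A]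
variable {D : Module.End ℂ A} {θ : ℕ → A → A → ℕ →₀ A}

lemma theta_bilin (hθ : IsFormalDef D θ) (i : ℕ) :
    Bilin (fun a b => θ i a b - substNeg D (θ i b a)) := by
  obtain ⟨h1, h2, h3, h4⟩ := hθ.bilin i
  refine ⟨fun a a' b => ?_, fun r a b => ?_, fun a b b' => ?_, fun r a b => ?_⟩
  · simp only [h1, h3, substNeg_add]; abel
  · simp only [h2, h4, substNeg_smul, smul_sub]
  · simp only [h3, h1, substNeg_add]; abel
  · simp only [h4, h2, substNeg_smul, smul_sub]

lemma theta_sesq1 (hθ : IsFormalDef D θ) (i : ℕ) (l : ℂ) (a b : A) :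
    ev l (θ i (D a) b - substNeg D (θ i b (D a)))
      = (-l) • ev l (θ i a b - substNeg D (θ i b a)) := by
  have hT : Commute D (-(l • (1 : Module.End ℂ A)) - D) :=
    (((Commute.one_right D).smul_right l).neg_right).sub_right (Commute.refl D)
  rw [ev_sub, hθ.sesq1 i l a b, ev_substNeg, opEv_D_right (hθ.sesq2 i) hT b a,
    ev_sub, ev_substNeg, smul_sub]
  simp only [LinearMap.sub_apply, LinearMap.neg_apply, LinearMap.smul_apply,
    Module.End.one_apply]
  module

lemma theta_sesq2 (hθ : IsFormalDef D θ) (i : ℕ) (l : ℂ) (a b : A) :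
    ev l (θ i a (D b) - substNeg D (θ i (D b) a))
      = D (ev l (θ i a b - substNeg D (θ i b a)))
        + l • ev l (θ i a b - substNeg D (θ i b a)) := by
  rw [ev_sub, hθ.sesq2 i l a b, ev_substNeg, opEv_D_left (hθ.sesq1 i) _ b a,
    ev_sub, ev_substNeg]
  simp only [map_sub, LinearMap.sub_apply, LinearMap.neg_apply, LinearMap.smul_apply,
    Module.End.one_apply, smul_sub]
  module

lemma theta_skew (hθ : IsFormalDef D θ) (i : ℕ) (l : ℂ) (a b : A) :
    ev l (θ i a b - substNeg D (θ i b a))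
      = - ev l (substNeg D (θ i b a - substNeg D (θ i a b))) := by
  rw [substNeg_sub, ev_sub, ev_sub, opEv_substNeg_substNeg]
  abel

lemma theta_deform (hθ : IsFormalDef D θ) (n : ℕ) (l m : ℂ) (a b c : A) :
    (∑ i ∈ Finset.range (n + 1),
        ev l (θ i a (ev m (θ (n - i) b c - substNeg D (θ (n - i) c b)))
          - substNeg D (θ i (ev m (θ (n - i) b c - substNeg D (θ (n - i) c b))) a)))
      = ∑ i ∈ Finset.range (n + 1),
        (ev (l + m) (θ i (ev l (θ (n - i) a b - substNeg D (θ (n - i) b a))) c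
            - substNeg D (θ i c (ev l (θ (n - i) a b - substNeg D (θ (n - i) b a)))))
          + ev m (θ i b (ev l (θ (n - i) a c - substNeg D (θ (n - i) c a)))
            - substNeg D (θ i (ev l (θ (n - i) a c - substNeg D (θ (n - i) c a))) b))) := by
  have hCl : Commute D (l • (1 : Module.End ℂ A)) := (Commute.one_right D).smul_right l
  have hCm : Commute D (m • (1 : Module.End ℂ A)) := (Commute.one_right D).smul_right m
  have hClm : Commute D (-((l + m) • (1 : Module.End ℂ A)) - D) :=
    (((Commute.one_right D).smul_right (l + m)).neg_right).sub_right (Commute.refl D)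
  have hop1 : -(m • (1 : Module.End ℂ A)) - D - l • (1 : Module.End ℂ A) = -((l + m) • (1 : Module.End ℂ A)) - D := by module
  have hop2 : -(l • (1 : Module.End ℂ A)) - D - m • (1 : Module.End ℂ A) = -((l + m) • (1 : Module.End ℂ A)) - D := by module
  have hop3 : (l + m) • (1 : Module.End ℂ A) - l • (1 : Module.End ℂ A) = m • (1 : Module.End ℂ A) := by module
  have hop4 : -(l • (1 : Module.End ℂ A)) - D - (-((l + m) • (1 : Module.End ℂ A)) - D) = m • (1 : Module.End ℂ A) := by module
  have lhs_i : ∀ i ∈ Finset.range (n + 1),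
      ev l (θ i a (ev m (θ (n - i) b c - substNeg D (θ (n - i) c b)))
          - substNeg D (θ i (ev m (θ (n - i) b c - substNeg D (θ (n - i) c b))) a))
        = ((CR (θ i) (θ (n - i)) (m • (1 : Module.End ℂ A)) (l • (1 : Module.End ℂ A)) a b c
 - CR (θ i) (θ (n - i)) (-((l + m) • (1 : Module.End ℂ A)) - D) (l • (1 : Module.End ℂ A)) a c b)
 - (CL (θ i) (θ (n - i)) (m • (1 : Module.End ℂ A)) (-(l • (1 : Module.End ℂ A)) - D) b c a
 - CL (θ i) (θ (n - i)) (-((l + m) • (1 : Module.End ℂ A)) - D) (-(l • (1 : Module.End ℂ A)) - D) c b a)) := by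
    intro i _
    simp only [ev_sub]
    simp only [ev_substNeg]
    simp only [Bilin.sub_right (hθ.bilin i), Bilin.sub_left (hθ.bilin i)]
    simp only [ev_sub, opEv_sub]
    simp only [ev_eq_opEv]
    rw [CR_scalar (hθ.bilin i), CR_E (hθ.bilin i) (hθ.sesq2 i) hCl,
      CL_scalar (hθ.bilin i), CL_E (hθ.bilin i) (hθ.sesq1 i)]
    rw [hop1, hop2]
  have rhs_i : ∀ i ∈ Finset.range (n + 1),
      (ev (l + m) (θ i (ev l (θ (n - i) a b - substNeg D (θ (n - i) b a))) c
            - substNeg D (θ i c (ev l (θ (n - i) a b - substNeg D (θ (n - i) b a)))))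
          + ev m (θ i b (ev l (θ (n - i) a c - substNeg D (θ (n - i) c a)))
            - substNeg D (θ i (ev l (θ (n - i) a c - substNeg D (θ (n - i) c a))) b)))
        = (((CL (θ i) (θ (n - i)) (l • (1 : Module.End ℂ A)) ((l + m) • (1 : Module.End ℂ A)) a b c
 - CL (θ i) (θ (n - i)) (m • (1 : Module.End ℂ A)) ((l + m) • (1 : Module.End ℂ A)) b a c)
 - (CR (θ i) (θ (n - i)) (l • (1 : Module.End ℂ A)) (-((l + m) • (1 : Module.End ℂ A)) - D) c a b
 - CR (θ i) (θ (n - i)) (m • (1 : Module.End ℂ A)) (-((l + m) • (1 : Module.End ℂ A)) - D) c b a))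
 + ((CR (θ i) (θ (n - i)) (l • (1 : Module.End ℂ A)) (m • (1 : Module.End ℂ A)) b a c
 - CR (θ i) (θ (n - i)) (-((l + m) • (1 : Module.End ℂ A)) - D) (m • (1 : Module.End ℂ A)) b c a)
 - (CL (θ i) (θ (n - i)) (l • (1 : Module.End ℂ A)) (-(m • (1 : Module.End ℂ A)) - D) a c b
 - CL (θ i) (θ (n - i)) (-((l + m) • (1 : Module.End ℂ A)) - D) (-(m • (1 : Module.End ℂ A)) - D) c a b))) := by
    intro i _
    simp only [ev_sub]
    simp only [ev_substNeg]
    simp only [Bilin.sub_right (hθ.bilin i), Bilin.sub_left (hθ.bilin i)]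
    simp only [ev_sub, opEv_sub]
    simp only [ev_eq_opEv]
    rw [CL_scalar (hθ.bilin i), CL_E (hθ.bilin i) (hθ.sesq1 i),
      CR_scalar (hθ.bilin i), CR_E (hθ.bilin i) (hθ.sesq2 i) hClm,
      CR_scalar (hθ.bilin i), CR_E (hθ.bilin i) (hθ.sesq2 i) hCm,
      CL_scalar (hθ.bilin i), CL_E (hθ.bilin i) (hθ.sesq1 i)]
    rw [hop1, hop2, hop3, hop4]
  have J1 := master hθ n l (m • (1 : Module.End ℂ A)) a b c
  have hsm1 : l • (1 : Module.End ℂ A) + m • (1 : Module.End ℂ A) = (l + m) • (1 : Module.End ℂ A) := by module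
  rw [hsm1] at J1
  have J2 := master hθ n l (-((l + m) • (1 : Module.End ℂ A)) - D) a c b
  have hsm2 : l • (1 : Module.End ℂ A) + (-((l + m) • (1 : Module.End ℂ A)) - D) = -(m • (1 : Module.End ℂ A)) - D := by module
  rw [hsm2] at J2
  have J3 := master hθ n m (-((l + m) • (1 : Module.End ℂ A)) - D) b c a
  have hsm3 : m • (1 : Module.End ℂ A) + (-((l + m) • (1 : Module.End ℂ A)) - D) = -(l • (1 : Module.End ℂ A)) - D := by module
  rw [hsm3] at J3
  have hz1 : ∑ i ∈ Finset.range (n + 1), ((CL (θ i) (θ (n - i)) (l • (1 : Module.End ℂ A)) ((l + m) • (1 : Module.End ℂ A)) a b c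
 - CR (θ i) (θ (n - i)) (m • (1 : Module.End ℂ A)) (l • (1 : Module.End ℂ A)) a b c)
 - (CL (θ i) (θ (n - i)) (m • (1 : Module.End ℂ A)) ((l + m) • (1 : Module.End ℂ A)) b a c
 - CR (θ i) (θ (n - i)) (l • (1 : Module.End ℂ A)) (m • (1 : Module.End ℂ A)) b a c)) = 0 := by
    rw [Finset.sum_sub_distrib]
    exact sub_eq_zero.mpr J1
  have hz2 : ∑ i ∈ Finset.range (n + 1), ((CL (θ i) (θ (n - i)) (l • (1 : Module.End ℂ A)) (-(m • (1 : Module.End ℂ A)) - D) a c b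
 - CR (θ i) (θ (n - i)) (-((l + m) • (1 : Module.End ℂ A)) - D) (l • (1 : Module.End ℂ A)) a c b)
 - (CL (θ i) (θ (n - i)) (-((l + m) • (1 : Module.End ℂ A)) - D) (-(m • (1 : Module.End ℂ A)) - D) c a b
 - CR (θ i) (θ (n - i)) (l • (1 : Module.End ℂ A)) (-((l + m) • (1 : Module.End ℂ A)) - D) c a b)) = 0 := by
    rw [Finset.sum_sub_distrib]
    exact sub_eq_zero.mpr J2
  have hz3 : ∑ i ∈ Finset.range (n + 1), ((CL (θ i) (θ (n - i)) (m • (1 : Module.End ℂ A)) (-(l • (1 : Module.End ℂ A)) - D) b c a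
 - CR (θ i) (θ (n - i)) (-((l + m) • (1 : Module.End ℂ A)) - D) (m • (1 : Module.End ℂ A)) b c a)
 - (CL (θ i) (θ (n - i)) (-((l + m) • (1 : Module.End ℂ A)) - D) (-(l • (1 : Module.End ℂ A)) - D) c b a
 - CR (θ i) (θ (n - i)) (m • (1 : Module.End ℂ A)) (-((l + m) • (1 : Module.End ℂ A)) - D) c b a)) = 0 := by
    rw [Finset.sum_sub_distrib]
    exact sub_eq_zero.mpr J3
  rw [Finset.sum_congr rfl lhs_i, Finset.sum_congr rfl rhs_i, ← sub_eq_zero,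
    ← Finset.sum_sub_distrib]
  have key : ∀ i ∈ Finset.range (n + 1),
      ((CR (θ i) (θ (n - i)) (m • (1 : Module.End ℂ A)) (l • (1 : Module.End ℂ A)) a b c
 - CR (θ i) (θ (n - i)) (-((l + m) • (1 : Module.End ℂ A)) - D) (l • (1 : Module.End ℂ A)) a c b)
 - (CL (θ i) (θ (n - i)) (m • (1 : Module.End ℂ A)) (-(l • (1 : Module.End ℂ A)) - D) b c a
 - CL (θ i) (θ (n - i)) (-((l + m) • (1 : Module.End ℂ A)) - D) (-(l • (1 : Module.End ℂ A)) - D) c b a))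
        - (((CL (θ i) (θ (n - i)) (l • (1 : Module.End ℂ A)) ((l + m) • (1 : Module.End ℂ A)) a b c
 - CL (θ i) (θ (n - i)) (m • (1 : Module.End ℂ A)) ((l + m) • (1 : Module.End ℂ A)) b a c)
 - (CR (θ i) (θ (n - i)) (l • (1 : Module.End ℂ A)) (-((l + m) • (1 : Module.End ℂ A)) - D) c a b
 - CR (θ i) (θ (n - i)) (m • (1 : Module.End ℂ A)) (-((l + m) • (1 : Module.End ℂ A)) - D) c b a))
 + ((CR (θ i) (θ (n - i)) (l • (1 : Module.End ℂ A)) (m • (1 : Module.End ℂ A)) b a c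
 - CR (θ i) (θ (n - i)) (-((l + m) • (1 : Module.End ℂ A)) - D) (m • (1 : Module.End ℂ A)) b c a)
 - (CL (θ i) (θ (n - i)) (l • (1 : Module.End ℂ A)) (-(m • (1 : Module.End ℂ A)) - D) a c b
 - CL (θ i) (θ (n - i)) (-((l + m) • (1 : Module.End ℂ A)) - D) (-(m • (1 : Module.End ℂ A)) - D) c a b)))
      = -((CL (θ i) (θ (n - i)) (l • (1 : Module.End ℂ A)) ((l + m) • (1 : Module.End ℂ A)) a b c
 - CR (θ i) (θ (n - i)) (m • (1 : Module.End ℂ A)) (l • (1 : Module.End ℂ A)) a b c)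
 - (CL (θ i) (θ (n - i)) (m • (1 : Module.End ℂ A)) ((l + m) • (1 : Module.End ℂ A)) b a c
 - CR (θ i) (θ (n - i)) (l • (1 : Module.End ℂ A)) (m • (1 : Module.End ℂ A)) b a c))
        + ((CL (θ i) (θ (n - i)) (l • (1 : Module.End ℂ A)) (-(m • (1 : Module.End ℂ A)) - D) a c b
 - CR (θ i) (θ (n - i)) (-((l + m) • (1 : Module.End ℂ A)) - D) (l • (1 : Module.End ℂ A)) a c b)
 - (CL (θ i) (θ (n - i)) (-((l + m) • (1 : Module.End ℂ A)) - D) (-(m • (1 : Module.End ℂ A)) - D) c a b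
 - CR (θ i) (θ (n - i)) (l • (1 : Module.End ℂ A)) (-((l + m) • (1 : Module.End ℂ A)) - D) c a b))
        - ((CL (θ i) (θ (n - i)) (m • (1 : Module.End ℂ A)) (-(l • (1 : Module.End ℂ A)) - D) b c a
 - CR (θ i) (θ (n - i)) (-((l + m) • (1 : Module.End ℂ A)) - D) (m • (1 : Module.End ℂ A)) b c a)
 - (CL (θ i) (θ (n - i)) (-((l + m) • (1 : Module.End ℂ A)) - D) (-(l • (1 : Module.End ℂ A)) - D) c b a
 - CR (θ i) (θ (n - i)) (m • (1 : Module.End ℂ A)) (-((l + m) • (1 : Module.End ℂ A)) - D) c b a)) := by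
    intro i _
    abel
  rw [Finset.sum_congr rfl key, Finset.sum_sub_distrib, Finset.sum_add_distrib,
    Finset.sum_neg_distrib, hz1, hz2, hz3]
  simp

end AuxTheta
/-- If `θ_t` is a formal `1`-parameter deformation of the
left-symmetric conformal algebra `A`, then
`(Θ_t)_λ(a, b) = (θ_t)_λ(a, b) - (θ_t)_{-∂-λ}(b, a)` is a formal
`1`-parameter deformation of the sub-adjacent Lie conformal algebra `g(A)`. -/
theorem formal_deformation_subadjacent
    (D : Module.End ℂ A) (θ : ℕ → A → A → ℕ →₀ A) (hθ : IsFormalDef D θ) :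
    IsLieFormalDef D (fun i a b => θ i a b - substNeg D (θ i b a)) := by
  refine ⟨?_, fun i => theta_bilin hθ i, fun i l a b => theta_sesq1 hθ i l a b,
    fun i l a b => theta_sesq2 hθ i l a b, fun i l a b => theta_skew hθ i l a b,
    fun n l m a b c => theta_deform hθ n l m a b c⟩
  refine ⟨theta_bilin hθ 0, fun l a b => theta_sesq1 hθ 0 l a b,
    fun l a b => theta_sesq2 hθ 0 l a b, fun l a b => theta_skew hθ 0 l a b, ?_⟩
  intro l m a b c
  have h := theta_deform hθ 0 l m a b c
  simpa using h

end LSCpaper
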